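/- (Certifying a good configuration can be assumed to have an invertible projection) Let R be a finite set of slopes, s a slope not in R, and X, Y finitely-supported ℚ-valued random variables. Then there exist random variables X', Y' and an auxiliary random variable Φ on a possibly larger probability space such that: (1) (X',Y') has the same joint distribution as (X,Y); (2) π_s(X',Y') = π_s(X,Y) almost surely; (3) for every value φ₀ in the essential range of Φ, the map π_s is injective on the essential range of ((X',Y') | Φ = φ₀); and (4) for every slope r, H[π_r(X',Y') | Φ] ≤ H[π_r(X,Y)] while H[π_s(X',Y') | Φ] = H[π_s(X,Y)]. -/
import Mathlib


open scoped Classical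
open Finset

/-- Probability of an event under a weight function on a finite sample space. -/
noncomputable def prb {Ω : Type*} [Fintype Ω] (μ : Ω → ℝ) (E : Set Ω) : ℝ :=
  ∑ ω ∈ Finset.univ.filter (fun ω => ω ∈ E), μ ω

/-- `μ` is a probability mass function on the finite space `Ω`. -/
def IsProb {Ω : Type*} [Fintype Ω] (μ : Ω → ℝ) : Prop :=
  (∀ ω, 0 ≤ μ ω) ∧ ∑ ω, μ ω = 1

/-- Shannon entropy of a random variable `X` on a finite probability space. -/
noncomputable def ent {Ω S : Type*} [Fintype Ω] (μ : Ω → ℝ) (X : Ω → S) : ℝ :=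
  ∑ s ∈ Finset.univ.image X, Real.negMulLog (prb μ {ω | X ω = s})

/-- Independence of two random variables. -/
def IndepRV {Ω S T : Type*} [Fintype Ω] (μ : Ω → ℝ) (X : Ω → S) (Y : Ω → T) : Prop :=
  ∀ x y, prb μ {ω | X ω = x ∧ Y ω = y} = prb μ {ω | X ω = x} * prb μ {ω | Y ω = y}

/-- Conditional Shannon entropy `H[X|Z] = H[X,Z] - H[Z]`. -/
noncomputable def condEnt {Ω S T : Type*} [Fintype Ω] (μ : Ω → ℝ) (X : Ω → S) (Z : Ω → T) : ℝ :=
  ent μ (fun ω => (X ω, Z ω)) - ent μ Z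

/-- Entropic Ruzsa distance `d[X;Y] = H[X'-Y'] - H[X]/2 - H[Y]/2`,
realized on the product space so that the copies are independent. -/
noncomputable def rdist {Ω₁ Ω₂ : Type*} [Fintype Ω₁] [Fintype Ω₂]
    (μ₁ : Ω₁ → ℝ) (μ₂ : Ω₂ → ℝ) (X : Ω₁ → ℚ) (Y : Ω₂ → ℚ) : ℝ :=
  ent (fun p : Ω₁ × Ω₂ => μ₁ p.1 * μ₂ p.2) (fun p => X p.1 - Y p.2)
    - ent μ₁ X / 2 - ent μ₂ Y / 2

/-- The quantity `g(a) = H[X - a X'] - H[X]`, where `X'` is an independent copy of `X`. -/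
noncomputable def gfun {Ω : Type*} [Fintype Ω] (μ : Ω → ℝ) (X : Ω → ℚ) (a : ℚ) : ℝ :=
  ent (fun p : Ω × Ω => μ p.1 * μ p.2) (fun p => X p.1 - a * X p.2) - ent μ X

/-- Projection `π_r(x,y) = x + r y` for a finite slope `some r`, and `π_∞(x,y) = y`. -/
noncomputable def pSlope : Option ℚ → ℚ × ℚ → ℚ
  | none, p => p.2
  | some r, p => p.1 + r * p.2

/-- The measure `μ` conditioned on the event `Z = z`. -/
noncomputable def condMeasure {Ω T : Type*} [Fintype Ω] (μ : Ω → ℝ) (Z : Ω → T) (z : T) :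
    Ω → ℝ :=
  fun ω => if Z ω = z then μ ω / prb μ {ω' | Z ω' = z} else 0

/-- `E_{Z=z} d[X|Z=z ; X|Z=z]`, the averaged conditional entropic Ruzsa self-distance. -/
noncomputable def condSelfDoubling {Ω T : Type*} [Fintype Ω] (μ : Ω → ℝ)
    (X : Ω → ℚ) (Z : Ω → T) : ℝ :=
  ∑ z ∈ Finset.univ.image Z, prb μ {ω | Z ω = z} *
    rdist (condMeasure μ Z z) (condMeasure μ Z z) X X

section Helpers

variable {Ω : Type*} [Fintype Ω]

lemma prb_eq_sum_ite (μ : Ω → ℝ) (E : Set Ω) :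
    prb μ E = ∑ ω, if ω ∈ E then μ ω else 0 := by
  rw [prb, Finset.sum_filter]

lemma prb_nonneg {μ : Ω → ℝ} (h : ∀ ω, 0 ≤ μ ω) (E : Set Ω) : 0 ≤ prb μ E :=
  Finset.sum_nonneg fun ω _ => h ω

lemma prb_eq_zero {μ : Ω → ℝ} {E : Set Ω} (hE : ∀ ω ∈ E, μ ω = 0) : prb μ E = 0 :=
  Finset.sum_eq_zero fun ω hω => hE ω (Finset.mem_filter.1 hω).2

lemma prb_zero_forall {μ : Ω → ℝ} (h : ∀ ω, 0 ≤ μ ω) {E : Set Ω}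
    (h0 : prb μ E = 0) : ∀ ω ∈ E, μ ω = 0 := by
  intro ω hω
  exact (Finset.sum_eq_zero_iff_of_nonneg fun i _ => h i).1 h0 ω
    (Finset.mem_filter.2 ⟨Finset.mem_univ _, hω⟩)

lemma exists_of_prb_ne_zero {μ : Ω → ℝ} {E : Set Ω} (h : prb μ E ≠ 0) :
    ∃ ω ∈ E, μ ω ≠ 0 := by
  by_contra hc
  push_neg at hc
  exact h (prb_eq_zero hc)

lemma single_le_prb {μ : Ω → ℝ} (h : ∀ ω, 0 ≤ μ ω) {E : Set Ω} {ω : Ω} (hω : ω ∈ E) :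
    μ ω ≤ prb μ E :=
  Finset.single_le_sum (f := μ) (fun i _ => h i) (Finset.mem_filter.2 ⟨Finset.mem_univ _, hω⟩)

lemma prb_singleton (μ : Ω → ℝ) (ω₀ : Ω) : prb μ {ω | ω = ω₀} = μ ω₀ := by
  rw [prb_eq_sum_ite]
  simpa using Finset.sum_ite_eq' Finset.univ ω₀ μ

lemma prb_fiber_sum {α : Type*} (μ : Ω → ℝ) (Z : Ω → α) (E : Set Ω) :
    prb μ E = ∑ v ∈ Finset.univ.image Z, prb μ {ω | Z ω = v ∧ ω ∈ E} := by
  rw [prb, ← Finset.sum_fiberwise_of_maps_to (g := Z) (t := Finset.univ.image Z)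
      (fun x _ => Finset.mem_image_of_mem Z (Finset.mem_univ x))]
  refine Finset.sum_congr rfl fun v _ => ?_
  rw [prb, Finset.filter_filter]
  congr 1
  ext ω
  simp [and_comm]

lemma sum_prb_image {α : Type*} (μ : Ω → ℝ) (Z : Ω → α) :
    ∑ v ∈ Finset.univ.image Z, prb μ {ω | Z ω = v} = ∑ ω, μ ω := by
  have h := prb_fiber_sum μ Z Set.univ
  have h2 : prb μ Set.univ = ∑ ω, μ ω := by
    rw [prb_eq_sum_ite]; simp
  rw [h2] at h
  rw [h]
  refine Finset.sum_congr rfl fun v _ => ?_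
  congr 1; ext ω; simp

lemma prb_marginal {α β : Type*} (μ : Ω → ℝ) (A : Ω → α) (B : Ω → β) (a : α) :
    prb μ {ω | A ω = a} = ∑ b ∈ Finset.univ.image B, prb μ {ω | A ω = a ∧ B ω = b} := by
  rw [prb_fiber_sum μ B {ω | A ω = a}]
  refine Finset.sum_congr rfl fun b _ => ?_
  congr 1; ext ω; simp [and_comm]

lemma prb_eq_zero_of_not_mem_image {α : Type*} (μ : Ω → ℝ) (Z : Ω → α) {v : α}
    (h : v ∉ Finset.univ.image Z) : prb μ {ω | Z ω = v} = 0 := by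
  refine prb_eq_zero fun ω hω => ?_
  exact absurd (hω ▸ Finset.mem_image_of_mem Z (Finset.mem_univ ω)) h

end Helpers

section Helpers2

variable {Ω : Type*} [Fintype Ω]

lemma prb_comp_eq {α β : Type*} (μ : Ω → ℝ) (Z : Ω → α) (g : α → β) (v : β) :
    prb μ {ω | g (Z ω) = v} =
      ∑ p ∈ Finset.univ.image Z, if g p = v then prb μ {ω | Z ω = p} else 0 := by
  rw [prb_fiber_sum μ Z {ω | g (Z ω) = v}]
  refine Finset.sum_congr rfl fun p _ => ?_
  by_cases hg : g p = v
  · rw [if_pos hg]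
    congr 1; ext ω
    simp only [Set.mem_setOf_eq]
    exact ⟨fun h => h.1, fun h => ⟨h, by rw [h, hg]⟩⟩
  · rw [if_neg hg]
    refine prb_eq_zero fun ω hω => ?_
    exact absurd (hω.1 ▸ hω.2) hg

lemma prb_comp_congr {Ω₁ Ω₂ α β : Type*} [Fintype Ω₁] [Fintype Ω₂]
    (μ₁ : Ω₁ → ℝ) (μ₂ : Ω₂ → ℝ) (Z₁ : Ω₁ → α) (Z₂ : Ω₂ → α)
    (h : ∀ p, prb μ₁ {ω | Z₁ ω = p} = prb μ₂ {ω | Z₂ ω = p}) (g : α → β) (v : β) :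
    prb μ₁ {ω | g (Z₁ ω) = v} = prb μ₂ {ω | g (Z₂ ω) = v} := by
  classical
  rw [prb_comp_eq, prb_comp_eq]
  have e1 : ∑ p ∈ Finset.univ.image Z₁, (if g p = v then prb μ₁ {ω | Z₁ ω = p} else 0)
      = ∑ p ∈ Finset.univ.image Z₁ ∪ Finset.univ.image Z₂,
          (if g p = v then prb μ₁ {ω | Z₁ ω = p} else 0) :=
    Finset.sum_subset Finset.subset_union_left
      (fun p _ hp => by rw [prb_eq_zero_of_not_mem_image μ₁ Z₁ hp]; simp)
  have e2 : ∑ p ∈ Finset.univ.image Z₂, (if g p = v then prb μ₂ {ω | Z₂ ω = p} else 0)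
      = ∑ p ∈ Finset.univ.image Z₁ ∪ Finset.univ.image Z₂,
          (if g p = v then prb μ₂ {ω | Z₂ ω = p} else 0) :=
    Finset.sum_subset Finset.subset_union_right
      (fun p _ hp => by rw [prb_eq_zero_of_not_mem_image μ₂ Z₂ hp]; simp)
  rw [e1, e2]
  exact Finset.sum_congr rfl fun p _ => by rw [h p]

lemma ent_congr_dist {Ω₁ Ω₂ α : Type*} [Fintype Ω₁] [Fintype Ω₂]
    (μ₁ : Ω₁ → ℝ) (μ₂ : Ω₂ → ℝ) (A : Ω₁ → α) (B : Ω₂ → α)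
    (h : ∀ v, prb μ₁ {ω | A ω = v} = prb μ₂ {ω | B ω = v}) :
    ent μ₁ A = ent μ₂ B := by
  classical
  rw [ent, ent]
  have e1 : ∑ v ∈ Finset.univ.image A, Real.negMulLog (prb μ₁ {ω | A ω = v})
      = ∑ v ∈ Finset.univ.image A ∪ Finset.univ.image B,
          Real.negMulLog (prb μ₁ {ω | A ω = v}) :=
    Finset.sum_subset Finset.subset_union_left
      (fun v _ hv => by rw [prb_eq_zero_of_not_mem_image μ₁ A hv]; simp)
  have e2 : ∑ v ∈ Finset.univ.image B, Real.negMulLog (prb μ₂ {ω | B ω = v})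
      = ∑ v ∈ Finset.univ.image A ∪ Finset.univ.image B,
          Real.negMulLog (prb μ₂ {ω | B ω = v}) :=
    Finset.sum_subset Finset.subset_union_right
      (fun v _ hv => by rw [prb_eq_zero_of_not_mem_image μ₂ B hv]; simp)
  rw [e1, e2]
  exact Finset.sum_congr rfl fun v _ => by rw [h v]

lemma prb_congr_ae {α : Type*} {μ : Ω → ℝ} {A B : Ω → α}
    (h : ∀ ω, μ ω ≠ 0 → A ω = B ω) (v : α) :
    prb μ {ω | A ω = v} = prb μ {ω | B ω = v} := by
  rw [prb_eq_sum_ite, prb_eq_sum_ite]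
  refine Finset.sum_congr rfl fun ω _ => ?_
  by_cases hμ : μ ω = 0
  · simp [hμ]
  · rw [Set.mem_setOf_eq, Set.mem_setOf_eq, h ω hμ]

lemma prb_prod {Ω₁ Ω₂ α β : Type*} [Fintype Ω₁] [Fintype Ω₂]
    (μ₁ : Ω₁ → ℝ) (μ₂ : Ω₂ → ℝ) (A : Ω₁ → α) (B : Ω₂ → β) (a : α) (b : β) :
    prb (fun p : Ω₁ × Ω₂ => μ₁ p.1 * μ₂ p.2) {p | A p.1 = a ∧ B p.2 = b}
      = prb μ₁ {ω | A ω = a} * prb μ₂ {ω | B ω = b} := by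
  rw [prb_eq_sum_ite, prb_eq_sum_ite, prb_eq_sum_ite, Finset.sum_mul_sum,
    Fintype.sum_prod_type]
  refine Finset.sum_congr rfl fun x _ => Finset.sum_congr rfl fun y _ => ?_
  simp only [Set.mem_setOf_eq]
  by_cases h1 : A x = a <;> by_cases h2 : B y = b <;> simp [h1, h2]

lemma prb_fst {Ω₁ Ω₂ α : Type*} [Fintype Ω₁] [Fintype Ω₂]
    (μ₁ : Ω₁ → ℝ) {μ₂ : Ω₂ → ℝ} (h2 : ∑ ω, μ₂ ω = 1) (A : Ω₁ → α) (a : α) :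
    prb (fun p : Ω₁ × Ω₂ => μ₁ p.1 * μ₂ p.2) {p | A p.1 = a}
      = prb μ₁ {ω | A ω = a} := by
  rw [prb_eq_sum_ite, prb_eq_sum_ite, Fintype.sum_prod_type]
  refine Finset.sum_congr rfl fun x _ => ?_
  simp only [Set.mem_setOf_eq]
  by_cases hA : A x = a
  · simp [hA, ← Finset.mul_sum, h2]
  · simp [hA]

lemma prb_snd {Ω₁ Ω₂ β : Type*} [Fintype Ω₁] [Fintype Ω₂]
    {μ₁ : Ω₁ → ℝ} (h1 : ∑ ω, μ₁ ω = 1) (μ₂ : Ω₂ → ℝ) (B : Ω₂ → β) (b : β) :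
    prb (fun p : Ω₁ × Ω₂ => μ₁ p.1 * μ₂ p.2) {p | B p.2 = b}
      = prb μ₂ {ω | B ω = b} := by
  rw [prb_eq_sum_ite, prb_eq_sum_ite, Fintype.sum_prod_type]
  have : ∀ x : Ω₁, ∑ y, (if (x, y) ∈ {p : Ω₁ × Ω₂ | B p.2 = b} then μ₁ x * μ₂ y else 0)
      = μ₁ x * ∑ y, (if B y = b then μ₂ y else 0) := by
    intro x
    rw [Finset.mul_sum]
    refine Finset.sum_congr rfl fun y _ => ?_
    simp only [Set.mem_setOf_eq]
    by_cases hB : B y = b <;> simp [hB]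
  rw [Finset.sum_congr rfl fun x _ => this x, ← Finset.sum_mul, h1, one_mul]
  rfl

end Helpers2

section Helpers3

variable {Ω : Type*} [Fintype Ω]

lemma sum_pi_eval {ι : Type*} [Fintype ι] [DecidableEq ι]
    (g : ι → Ω → ℝ) (hg : ∀ c, ∑ z, g c z = 1) (c₀ : ι) (φ : Ω → ℝ) :
    ∑ f : ι → Ω, φ (f c₀) * ∏ c, g c (f c) = ∑ z, φ z * g c₀ z := by
  classical
  have key : ∀ f : ι → Ω, φ (f c₀) * ∏ c, g c (f c)
      = ∏ c, (if c = c₀ then φ (f c) * g c (f c) else g c (f c)) := by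
    intro f
    rw [← Finset.mul_prod_erase Finset.univ (fun c => g c (f c)) (Finset.mem_univ c₀),
        ← Finset.mul_prod_erase Finset.univ
          (fun c => if c = c₀ then φ (f c) * g c (f c) else g c (f c)) (Finset.mem_univ c₀)]
    rw [if_pos rfl, ← mul_assoc]
    congr 1
    refine Finset.prod_congr rfl fun c hc => ?_
    rw [if_neg (Finset.mem_erase.1 hc).1]
  calc ∑ f : ι → Ω, φ (f c₀) * ∏ c, g c (f c)
      = ∑ f : ι → Ω, ∏ c, (if c = c₀ then φ (f c) * g c (f c) else g c (f c)) :=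
        Finset.sum_congr rfl fun f _ => key f
    _ = ∏ c, ∑ z, (if c = c₀ then φ z * g c z else g c z) := by
        rw [Finset.prod_univ_sum]
        rw [Fintype.piFinset_univ]
    _ = ∑ z, φ z * g c₀ z := by
        rw [Fintype.prod_eq_single c₀ (fun c hc => by simp only [if_neg hc]; exact hg c)]
        simp

lemma isProb_pi {ι : Type*} [Fintype ι] [DecidableEq ι] {g : ι → Ω → ℝ}
    (h : ∀ c, IsProb (g c)) : IsProb (fun f : ι → Ω => ∏ c, g c (f c)) := by
  constructor
  · exact fun f => Finset.prod_nonneg fun c _ => (h c).1 (f c)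
  · calc ∑ f : ι → Ω, ∏ c, g c (f c) = ∏ c, ∑ z, g c z := by
          rw [Finset.prod_univ_sum, Fintype.piFinset_univ]
      _ = 1 := by rw [Finset.prod_congr rfl fun c _ => (h c).2]; simp

lemma isProb_prod {Ω₁ Ω₂ : Type*} [Fintype Ω₁] [Fintype Ω₂] {μ₁ : Ω₁ → ℝ} {μ₂ : Ω₂ → ℝ}
    (h₁ : IsProb μ₁) (h₂ : IsProb μ₂) : IsProb (fun p : Ω₁ × Ω₂ => μ₁ p.1 * μ₂ p.2) := by
  constructor
  · exact fun p => mul_nonneg (h₁.1 p.1) (h₂.1 p.2)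
  · rw [Fintype.sum_prod_type]
    simp only [← Finset.mul_sum, h₂.2, mul_one]
    exact h₁.2

lemma isProb_condMeasure {α : Type*} {μ : Ω → ℝ} (hμ : IsProb μ) (Z : Ω → α) (z : α)
    (h : prb μ {ω | Z ω = z} ≠ 0) : IsProb (condMeasure μ Z z) := by
  have hpos : 0 < prb μ {ω | Z ω = z} := lt_of_le_of_ne (prb_nonneg hμ.1 _) (Ne.symm h)
  constructor
  · intro ω
    rw [condMeasure]
    split
    · exact div_nonneg (hμ.1 ω) hpos.le
    · exact le_refl 0
  · have : ∑ ω, condMeasure μ Z z ω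
        = (∑ ω, if Z ω = z then μ ω else 0) / prb μ {ω' | Z ω' = z} := by
      rw [Finset.sum_div]
      refine Finset.sum_congr rfl fun ω _ => ?_
      rw [condMeasure]
      split <;> simp
    have h2 : prb μ {ω' | Z ω' = z} = ∑ ω, if Z ω = z then μ ω else 0 := by
      rw [prb_eq_sum_ite]; rfl
    rw [this, ← h2, div_self h]

lemma condMeasure_support {α : Type*} {μ : Ω → ℝ} {Z : Ω → α} {z : α} {ω : Ω}
    (h : condMeasure μ Z z ω ≠ 0) : Z ω = z := by
  by_contra hne
  rw [condMeasure, if_neg hne] at h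
  exact h rfl

end Helpers3

section Entropy

variable {Ω : Type*} [Fintype Ω]

lemma ent_def' {α : Type*} [DecidableEq α] (μ : Ω → ℝ) (X : Ω → α) :
    ent μ X = ∑ v ∈ Finset.univ.image X, Real.negMulLog (prb μ {ω | X ω = v}) := by
  rw [ent]
  congr!

lemma neg_log_aux {p P Q : ℝ} (hp : 0 ≤ p) (hP : 0 ≤ P) (hQ : 0 ≤ Q)
    (hpP : p ≤ P) (hpQ : p ≤ Q) :
    Real.negMulLog p ≤ -(p * Real.log P) - p * Real.log Q + (P * Q - p) := by
  rcases eq_or_lt_of_le hp with h0 | h0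
  · rw [← h0]
    simpa using mul_nonneg hP hQ
  · have hPp : 0 < P := lt_of_lt_of_le h0 hpP
    have hQp : 0 < Q := lt_of_lt_of_le h0 hpQ
    have hlog := Real.log_le_sub_one_of_pos (x := P * Q / p) (by positivity)
    have hexp : Real.log (P * Q / p) = Real.log P + Real.log Q - Real.log p := by
      rw [Real.log_div (by positivity) h0.ne', Real.log_mul hPp.ne' hQp.ne']
    rw [hexp] at hlog
    have h1 : p * (Real.log P + Real.log Q - Real.log p) ≤ P * Q - p := by
      calc p * (Real.log P + Real.log Q - Real.log p)
          ≤ p * (P * Q / p - 1) := mul_le_mul_of_nonneg_left hlog h0.le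
        _ = P * Q - p := by field_simp
    rw [Real.negMulLog]
    nlinarith [h1]

lemma ent_pair_le {α β : Type*} {μ : Ω → ℝ} (hμ : IsProb μ) (A : Ω → α) (B : Ω → β) :
    ent μ (fun ω => (A ω, B ω)) ≤ ent μ A + ent μ B := by
  classical
  have hsub : Finset.univ.image (fun ω => (A ω, B ω))
      ⊆ (Finset.univ.image A) ×ˢ (Finset.univ.image B) := by
    intro v hv
    rw [Finset.mem_image] at hv
    obtain ⟨ω, -, rfl⟩ := hv
    exact Finset.mem_product.2 ⟨Finset.mem_image_of_mem A (Finset.mem_univ ω),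
      Finset.mem_image_of_mem B (Finset.mem_univ ω)⟩
  have hpair : ent μ (fun ω => (A ω, B ω))
      = ∑ a ∈ Finset.univ.image A, ∑ b ∈ Finset.univ.image B,
          Real.negMulLog (prb μ {ω | (A ω, B ω) = (a, b)}) := by
    have h := Finset.sum_subset
      (f := fun v => Real.negMulLog (prb μ {ω | (A ω, B ω) = v})) hsub
      (fun v _ hv => by
        have h0 : prb μ {ω | (A ω, B ω) = v} = 0 :=
          prb_eq_zero fun ω hω =>
            absurd (hω ▸ Finset.mem_image_of_mem (fun ω => (A ω, B ω)) (Finset.mem_univ ω)) hv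
        simp only [h0, Real.negMulLog_zero])
    rw [ent_def']
    exact h.trans (Finset.sum_product _ _ _)
  have hPm : ∀ a, prb μ {ω | A ω = a}
      = ∑ b ∈ Finset.univ.image B, prb μ {ω | (A ω, B ω) = (a, b)} := by
    intro a
    rw [prb_marginal μ A B a]
    exact Finset.sum_congr rfl fun b _ => by congr 1; ext ω; simp [Prod.ext_iff]
  have hQm : ∀ b, prb μ {ω | B ω = b}
      = ∑ a ∈ Finset.univ.image A, prb μ {ω | (A ω, B ω) = (a, b)} := by
    intro b
    rw [prb_marginal μ B A b]
    exact Finset.sum_congr rfl fun a _ => by congr 1; ext ω; simp [Prod.ext_iff, and_comm]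
  have hPsum : ∑ a ∈ Finset.univ.image A, prb μ {ω | A ω = a} = 1 := by
    rw [sum_prb_image μ A, hμ.2]
  have hQsum : ∑ b ∈ Finset.univ.image B, prb μ {ω | B ω = b} = 1 := by
    rw [sum_prb_image μ B, hμ.2]
  have key : ∀ a ∈ Finset.univ.image A, ∀ b ∈ Finset.univ.image B,
      Real.negMulLog (prb μ {ω | (A ω, B ω) = (a, b)})
        ≤ -(prb μ {ω | (A ω, B ω) = (a, b)} * Real.log (prb μ {ω | A ω = a}))
          - prb μ {ω | (A ω, B ω) = (a, b)} * Real.log (prb μ {ω | B ω = b})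
          + (prb μ {ω | A ω = a} * prb μ {ω | B ω = b}
              - prb μ {ω | (A ω, B ω) = (a, b)}) := by
    intro a ha b hb
    refine neg_log_aux (prb_nonneg hμ.1 _) (prb_nonneg hμ.1 _) (prb_nonneg hμ.1 _) ?_ ?_
    · rw [hPm a]
      exact Finset.single_le_sum (f := fun b' => prb μ {ω | (A ω, B ω) = (a, b')})
        (fun b' _ => prb_nonneg hμ.1 _) hb
    · rw [hQm b]
      exact Finset.single_le_sum (f := fun a' => prb μ {ω | (A ω, B ω) = (a', b)})
        (fun a' _ => prb_nonneg hμ.1 _) ha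
  have hinner : ∀ a ∈ Finset.univ.image A,
      ∑ b ∈ Finset.univ.image B,
        (-(prb μ {ω | (A ω, B ω) = (a, b)} * Real.log (prb μ {ω | A ω = a}))
          - prb μ {ω | (A ω, B ω) = (a, b)} * Real.log (prb μ {ω | B ω = b})
          + (prb μ {ω | A ω = a} * prb μ {ω | B ω = b}
              - prb μ {ω | (A ω, B ω) = (a, b)}))
      = Real.negMulLog (prb μ {ω | A ω = a})
        + ∑ b ∈ Finset.univ.image B,
            -(prb μ {ω | (A ω, B ω) = (a, b)} * Real.log (prb μ {ω | B ω = b})) := by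
    intro a _
    rw [Finset.sum_add_distrib, Finset.sum_sub_distrib]
    have h1 : ∑ b ∈ Finset.univ.image B,
        -(prb μ {ω | (A ω, B ω) = (a, b)} * Real.log (prb μ {ω | A ω = a}))
        = Real.negMulLog (prb μ {ω | A ω = a}) := by
      rw [Finset.sum_neg_distrib, ← Finset.sum_mul, ← hPm a, Real.negMulLog, neg_mul]
    have h2 : ∑ b ∈ Finset.univ.image B,
        (prb μ {ω | A ω = a} * prb μ {ω | B ω = b}
          - prb μ {ω | (A ω, B ω) = (a, b)}) = 0 := by
      rw [Finset.sum_sub_distrib, ← Finset.mul_sum, hQsum, mul_one, ← hPm a, sub_self]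
    rw [h1, h2, add_zero, Finset.sum_neg_distrib]
    ring
  calc ent μ (fun ω => (A ω, B ω))
      ≤ ∑ a ∈ Finset.univ.image A, ∑ b ∈ Finset.univ.image B,
          (-(prb μ {ω | (A ω, B ω) = (a, b)} * Real.log (prb μ {ω | A ω = a}))
            - prb μ {ω | (A ω, B ω) = (a, b)} * Real.log (prb μ {ω | B ω = b})
            + (prb μ {ω | A ω = a} * prb μ {ω | B ω = b}
                - prb μ {ω | (A ω, B ω) = (a, b)})) := by
        rw [hpair]
        exact Finset.sum_le_sum fun a ha => Finset.sum_le_sum fun b hb => key a ha b hb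
    _ = ∑ a ∈ Finset.univ.image A,
          (Real.negMulLog (prb μ {ω | A ω = a})
            + ∑ b ∈ Finset.univ.image B,
                -(prb μ {ω | (A ω, B ω) = (a, b)} * Real.log (prb μ {ω | B ω = b}))) :=
        Finset.sum_congr rfl hinner
    _ = ent μ A + ∑ a ∈ Finset.univ.image A, ∑ b ∈ Finset.univ.image B,
          -(prb μ {ω | (A ω, B ω) = (a, b)} * Real.log (prb μ {ω | B ω = b})) := by
        rw [Finset.sum_add_distrib, ent]
    _ = ent μ A + ent μ B := by
        congr 1
        rw [Finset.sum_comm, ent]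
        refine Finset.sum_congr rfl fun b _ => ?_
        rw [Finset.sum_neg_distrib, ← Finset.sum_mul, ← hQm b, Real.negMulLog, neg_mul]

lemma condEnt_le_ent {α β : Type*} {μ : Ω → ℝ} (hμ : IsProb μ) (A : Ω → α) (Z : Ω → β) :
    condEnt μ A Z ≤ ent μ A := by
  have := ent_pair_le hμ A Z
  rw [condEnt]
  linarith

lemma ent_pair_indep {Ω₁ Ω₂ α β : Type*} [Fintype Ω₁] [Fintype Ω₂]
    {μ₁ : Ω₁ → ℝ} {μ₂ : Ω₂ → ℝ} (h₁ : IsProb μ₁) (h₂ : IsProb μ₂)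
    (A : Ω₁ → α) (B : Ω₂ → β) :
    ent (fun q : Ω₁ × Ω₂ => μ₁ q.1 * μ₂ q.2) (fun q => (A q.1, B q.2))
      = ent μ₁ A + ent μ₂ B := by
  classical
  have himg : Finset.univ.image (fun q : Ω₁ × Ω₂ => (A q.1, B q.2))
      = (Finset.univ.image A) ×ˢ (Finset.univ.image B) := by
    ext v
    simp only [Finset.mem_image, Finset.mem_product, Finset.mem_univ, true_and, Prod.exists]
    constructor
    · rintro ⟨x, y, h⟩
      rw [← h]
      exact ⟨⟨x, rfl⟩, ⟨y, rfl⟩⟩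
    · rintro ⟨⟨x, hx⟩, ⟨y, hy⟩⟩
      exact ⟨x, y, by rw [hx, hy]⟩
  have hprb : ∀ a b, prb (fun q : Ω₁ × Ω₂ => μ₁ q.1 * μ₂ q.2) {q | (A q.1, B q.2) = (a, b)}
      = prb μ₁ {ω | A ω = a} * prb μ₂ {ω | B ω = b} := by
    intro a b
    rw [← prb_prod μ₁ μ₂ A B a b]
    congr 1; ext q; simp [Prod.ext_iff]
  have hQsum : ∑ b ∈ Finset.univ.image B, prb μ₂ {ω | B ω = b} = 1 := by
    rw [sum_prb_image μ₂ B, h₂.2]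
  have hPsum : ∑ a ∈ Finset.univ.image A, prb μ₁ {ω | A ω = a} = 1 := by
    rw [sum_prb_image μ₁ A, h₁.2]
  rw [ent_def', himg, Finset.sum_product]
  calc ∑ a ∈ Finset.univ.image A, ∑ b ∈ Finset.univ.image B,
        Real.negMulLog (prb (fun q : Ω₁ × Ω₂ => μ₁ q.1 * μ₂ q.2) {q | (A q.1, B q.2) = (a, b)})
      = ∑ a ∈ Finset.univ.image A,
          (Real.negMulLog (prb μ₁ {ω | A ω = a}) + prb μ₁ {ω | A ω = a} * ent μ₂ B) := by
        refine Finset.sum_congr rfl fun a _ => ?_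
        calc ∑ b ∈ Finset.univ.image B,
              Real.negMulLog (prb (fun q : Ω₁ × Ω₂ => μ₁ q.1 * μ₂ q.2)
                {q | (A q.1, B q.2) = (a, b)})
            = ∑ b ∈ Finset.univ.image B,
                (prb μ₂ {ω | B ω = b} * Real.negMulLog (prb μ₁ {ω | A ω = a})
                  + prb μ₁ {ω | A ω = a} * Real.negMulLog (prb μ₂ {ω | B ω = b})) := by
              refine Finset.sum_congr rfl fun b _ => ?_
              rw [hprb a b, Real.negMulLog_mul]
          _ = Real.negMulLog (prb μ₁ {ω | A ω = a}) + prb μ₁ {ω | A ω = a} * ent μ₂ B := by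
              rw [Finset.sum_add_distrib, ← Finset.sum_mul, hQsum, one_mul,
                ← Finset.mul_sum, ent]
    _ = ent μ₁ A + ent μ₂ B := by
        rw [Finset.sum_add_distrib, ← Finset.sum_mul, hPsum, one_mul, ent, ent]

end Entropy

theorem aux_construction {Ω : Type} [Fintype Ω] (μ : Ω → ℝ) (hμ : IsProb μ)
    (s : Option ℚ) (X Y : Ω → ℚ) :
    ∃ (Ω' : Type) (_ : Fintype Ω') (μ' : Ω' → ℝ) (T : Ω' → Ω)
      (X' Y' : Ω' → ℚ) (F : Type) (Φ : Ω' → F),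
      IsProb μ' ∧
      (∀ ω : Ω, prb μ' {ω' | T ω' = ω} = μ ω) ∧
      (∀ p : ℚ × ℚ, prb μ' {ω' | (X' ω', Y' ω') = p} = prb μ {ω | (X ω, Y ω) = p}) ∧
      prb μ' {ω' | pSlope s (X' ω', Y' ω') ≠ pSlope s (X (T ω'), Y (T ω'))} = 0 ∧
      (∀ (φ₀ : F) (p p' : ℚ × ℚ),
        prb μ' {ω' | (X' ω', Y' ω') = p ∧ Φ ω' = φ₀} ≠ 0 →
        prb μ' {ω' | (X' ω', Y' ω') = p' ∧ Φ ω' = φ₀} ≠ 0 →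
        pSlope s p = pSlope s p' → p = p') ∧
      (∀ r : Option ℚ,
        condEnt μ' (fun ω' => pSlope r (X' ω', Y' ω')) Φ ≤
          ent μ (fun ω => pSlope r (X ω, Y ω))) ∧
      condEnt μ' (fun ω' => pSlope s (X' ω', Y' ω')) Φ =
        ent μ (fun ω => pSlope s (X ω, Y ω)) := by
  classical
  -- the projection random variable
  set S : Ω → ℚ := fun ω => pSlope s (X ω, Y ω) with hS
  set Cs : Type := {c : ℚ // c ∈ Finset.univ.image S} with hCs
  set ν : Cs → Ω → ℝ := fun c =>
    if prb μ {ω | S ω = c.1} = 0 then μ else condMeasure μ S c.1 with hν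
  have hνprob : ∀ c, IsProb (ν c) := by
    intro c
    by_cases h : prb μ {ω | S ω = c.1} = 0
    · rw [hν]; simpa [h] using hμ
    · rw [hν]; simpa [h] using isProb_condMeasure hμ S c.1 h
  have hνsupp : ∀ (c : Cs) (z : Ω), prb μ {ω | S ω = c.1} ≠ 0 → ν c z ≠ 0 → S z = c.1 := by
    intro c z h hz
    rw [hν] at hz
    simp only [if_neg h] at hz
    exact condMeasure_support hz
  set νpi : (Cs → Ω) → ℝ := fun f => ∏ c, ν c (f c) with hνpi
  have hνpiprob : IsProb νpi := isProb_pi hνprob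
  set μ' : Ω × (Cs → Ω) → ℝ := fun q => μ q.1 * νpi q.2 with hμ'def
  have hμ'prob : IsProb μ' := isProb_prod hμ hνpiprob
  set cS : Ω → Cs := fun ω => ⟨S ω, Finset.mem_image_of_mem S (Finset.mem_univ ω)⟩ with hcS
  set X' : Ω × (Cs → Ω) → ℚ := fun q => X (q.2 (cS q.1)) with hX'
  set Y' : Ω × (Cs → Ω) → ℚ := fun q => Y (q.2 (cS q.1)) with hY'
  -- support property
  have key_supp : ∀ q : Ω × (Cs → Ω), μ' q ≠ 0 → S (q.2 (cS q.1)) = S q.1 := by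
    intro q hq
    rw [hμ'def] at hq
    have h1 : μ q.1 ≠ 0 := fun h => hq (by simp [h])
    have h2 : νpi q.2 ≠ 0 := fun h => hq (by simp [h])
    rw [hνpi] at h2
    have h3 : ν (cS q.1) (q.2 (cS q.1)) ≠ 0 :=
      Finset.prod_ne_zero_iff.1 h2 (cS q.1) (Finset.mem_univ _)
    have hP : prb μ {ω | S ω = (cS q.1).1} ≠ 0 := by
      intro h0
      exact h1 (prb_zero_forall hμ.1 h0 q.1 rfl)
    exact hνsupp _ _ hP h3
  -- the joint distribution identity
  have dist_key : ∀ p : ℚ × ℚ,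
      prb μ' {q : Ω × (Cs → Ω) | (X' q, Y' q) = p} = prb μ {ω | (X ω, Y ω) = p} := by
    intro p
    set χ : Ω → ℝ := fun z => if (X z, Y z) = p then 1 else 0 with hχ
    have step1 : prb μ' {q : Ω × (Cs → Ω) | (X' q, Y' q) = p}
        = ∑ ω, μ ω * ∑ z, χ z * ν (cS ω) z := by
      rw [prb_eq_sum_ite, Fintype.sum_prod_type]
      refine Finset.sum_congr rfl fun ω _ => ?_
      trans (∑ f : Cs → Ω, μ ω * (χ (f (cS ω)) * ∏ c, ν c (f c)))
      · refine Finset.sum_congr rfl fun f _ => ?_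
        by_cases hcc : (X (f (cS ω)), Y (f (cS ω))) = p
        · rw [if_pos (show (ω, f) ∈ {q : Ω × (Cs → Ω) | (X' q, Y' q) = p} from hcc)]
          simp [hμ'def, hνpi, hχ, hcc]
        · rw [if_neg (show (ω, f) ∉ {q : Ω × (Cs → Ω) | (X' q, Y' q) = p} from hcc)]
          simp [hχ, hcc]
      · rw [← Finset.mul_sum]
        congr 1
        exact sum_pi_eval ν (fun c => (hνprob c).2) (cS ω) χ
    rw [step1]
    set c₀ : ℚ := pSlope s p with hc₀
    set Qp : ℝ := prb μ {ω | (X ω, Y ω) = p} with hQp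
    set P₀ : ℝ := prb μ {ω | S ω = c₀} with hP₀
    have hXYS : ∀ z : Ω, (X z, Y z) = p → S z = c₀ := by
      intro z hz
      show pSlope s (X z, Y z) = c₀
      rw [hz]
    have perω : ∀ ω, μ ω * ∑ z, χ z * ν (cS ω) z
        = (if S ω = c₀ then μ ω else 0) * (Qp / P₀) := by
      intro ω
      by_cases hμω : μ ω = 0
      · rw [hμω]; simp
      · have hPω : prb μ {ω' | S ω' = S ω} ≠ 0 := by
          intro h0
          exact hμω (prb_zero_forall hμ.1 h0 ω rfl)
        have hνω : ν (cS ω) = condMeasure μ S (S ω) := by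
          show (if prb μ {ω' | S ω' = (cS ω).1} = 0 then μ else condMeasure μ S (cS ω).1) = _
          rw [if_neg hPω]
        have hW : ∑ z, χ z * ν (cS ω) z
            = if S ω = c₀ then Qp / P₀ else 0 := by
          rw [hνω]
          by_cases hωc : S ω = c₀
          · rw [if_pos hωc]
            have hptw : ∀ z, χ z * condMeasure μ S (S ω) z
                = (if (X z, Y z) = p then μ z else 0) / prb μ {ω' | S ω' = S ω} := by
              intro z
              by_cases hz : (X z, Y z) = p
              · have hSz : S z = S ω := by rw [hXYS z hz]; exact hωc.symm
                simp [hχ, condMeasure, hz, hSz]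
              · simp [hχ, condMeasure, hz]
            rw [Finset.sum_congr rfl fun z _ => hptw z, ← Finset.sum_div]
            have he : prb μ {z | (X z, Y z) = p} = ∑ z, if (X z, Y z) = p then μ z else 0 := by
              rw [prb_eq_sum_ite]
              refine Finset.sum_congr rfl fun z _ => ?_
              by_cases hz : (X z, Y z) = p <;> simp [hz]
            rw [← he, hωc]
          · rw [if_neg hωc]
            refine Finset.sum_eq_zero fun z _ => ?_
            rw [hχ, condMeasure]
            by_cases hz : (X z, Y z) = p
            · have hSz : ¬ (S z = S ω) := by
                rw [hXYS z hz]
                exact fun h => hωc h.symm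
              simp [hχ, condMeasure, hz, hSz]
            · simp [hχ, condMeasure, hz]
        rw [hW]
        by_cases hωc : S ω = c₀ <;> simp [hωc]
    rw [Finset.sum_congr rfl fun ω _ => perω ω, ← Finset.sum_mul]
    have hsum : ∑ ω, (if S ω = c₀ then μ ω else 0) = P₀ := by
      rw [hP₀, prb_eq_sum_ite]
      refine Finset.sum_congr rfl fun ω _ => ?_
      by_cases h : S ω = c₀ <;> simp [h]
    rw [hsum]
    by_cases hP0 : P₀ = 0
    · have hQp0 : Qp = 0 := by
        rw [hQp]
        refine prb_eq_zero fun ω hω => ?_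
        exact prb_zero_forall hμ.1 hP0 ω (hXYS ω hω)
      rw [hP0, hQp0]
      simp
    · rw [mul_comm]
      exact div_mul_cancel₀ _ hP0
  refine ⟨Ω × (Cs → Ω), inferInstance, μ', Prod.fst, X', Y', (Cs → Ω), Prod.snd,
    hμ'prob, ?_, dist_key, ?_, ?_, ?_, ?_⟩
  · -- pushforward
    intro ω
    exact (prb_fst μ hνpiprob.2 (fun z => z) ω).trans (prb_singleton μ ω)
  · -- a.s. equality of projections
    refine prb_eq_zero fun q hq => ?_
    by_contra h0
    exact hq (key_supp q h0)
  · -- injectivity given Φ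
    intro φ₀ p p' hp hp' hss
    obtain ⟨q, hq, hq0⟩ := exists_of_prb_ne_zero hp
    obtain ⟨q', hq', hq0'⟩ := exists_of_prb_ne_zero hp'
    obtain ⟨hq1, hq2⟩ := hq
    obtain ⟨hq1', hq2'⟩ := hq'
    have e1 : pSlope s p = S q.1 := by rw [← hq1]; exact key_supp q hq0
    have e1' : pSlope s p' = S q'.1 := by rw [← hq1']; exact key_supp q' hq0'
    have hc : cS q.1 = cS q'.1 := by
      refine Subtype.ext ?_
      show S q.1 = S q'.1
      rw [← e1, ← e1']
      exact hss
    rw [← hq1, ← hq1']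
    show (X (q.2 (cS q.1)), Y (q.2 (cS q.1))) = (X (q'.2 (cS q'.1)), Y (q'.2 (cS q'.1)))
    rw [hq2, hq2', hc]
  · -- entropy inequalities
    intro r
    have hdist : ∀ v, prb μ' {q : Ω × (Cs → Ω) | pSlope r (X' q, Y' q) = v}
        = prb μ {ω | pSlope r (X ω, Y ω) = v} := fun v =>
      prb_comp_congr μ' μ (fun q => (X' q, Y' q)) (fun ω => (X ω, Y ω)) dist_key (pSlope r) v
    calc condEnt μ' (fun q => pSlope r (X' q, Y' q)) Prod.snd
        ≤ ent μ' (fun q => pSlope r (X' q, Y' q)) :=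
          condEnt_le_ent hμ'prob _ _
      _ = ent μ (fun ω => pSlope r (X ω, Y ω)) :=
          ent_congr_dist _ _ _ _ hdist
  · -- entropy equality for the slope s
    have hae : ∀ q : Ω × (Cs → Ω), μ' q ≠ 0 →
        (pSlope s (X' q, Y' q), (Prod.snd q : Cs → Ω)) = (S q.1, q.2) := by
      intro q hq
      exact congrArg (fun t => (t, q.2)) (key_supp q hq)
    have h1 : ent μ' (fun q => (pSlope s (X' q, Y' q), (Prod.snd q : Cs → Ω)))
        = ent μ' (fun q : Ω × (Cs → Ω) => (S q.1, q.2)) :=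
      ent_congr_dist _ _ _ _ (fun v => prb_congr_ae hae v)
    have h2 : ent μ' (fun q : Ω × (Cs → Ω) => (S q.1, q.2))
        = ent μ S + ent νpi (fun z => z) :=
      ent_pair_indep hμ hνpiprob S (fun z => z)
    have h3 : ent μ' (Prod.snd : Ω × (Cs → Ω) → Cs → Ω) = ent νpi (fun z => z) :=
      ent_congr_dist _ _ _ _ (fun f => prb_snd hμ.2 νpi (fun z => z) f)
    show ent μ' (fun q => (pSlope s (X' q, Y' q), (Prod.snd q : Cs → Ω)))
        - ent μ' (Prod.snd : Ω × (Cs → Ω) → Cs → Ω) = ent μ S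
    rw [h1, h2, h3, add_sub_cancel_right]

/-- any pair `(X,Y)` can be replaced (on a larger probability space) by a pair
`(X',Y')` with the same distribution and the same `π_s` projection almost surely, such that,
conditionally on an auxiliary variable `Φ`, the projection `π_s` is injective on the essential
range, every projection's conditional entropy does not increase, and the conditional entropy of
the `π_s` projection is unchanged. -/
theorem exists_invertible_projection {Ω : Type*} [Fintype Ω] (μ : Ω → ℝ) (hμ : IsProb μ)
    (R : Finset (Option ℚ)) (s : Option ℚ) (hs : s ∉ R) (X Y : Ω → ℚ) :
    ∃ (Ω' : Type) (_ : Fintype Ω') (μ' : Ω' → ℝ) (T : Ω' → Ω)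
      (X' Y' : Ω' → ℚ) (F : Type) (Φ : Ω' → F),
      IsProb μ' ∧
      -- `T` realizes `μ` as the pushforward of `μ'`
      (∀ ω : Ω, prb μ' {ω' | T ω' = ω} = μ ω) ∧
      -- (1) `(X',Y')` has the same joint distribution as `(X,Y)`
      (∀ q q' : ℚ, prb μ' {ω' | X' ω' = q ∧ Y' ω' = q'} = prb μ {ω | X ω = q ∧ Y ω = q'}) ∧
      -- (2) `π_s(X',Y') = π_s(X,Y)` almost surely
      prb μ' {ω' | pSlope s (X' ω', Y' ω') ≠ pSlope s (X (T ω'), Y (T ω'))} = 0 ∧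
      -- (3) conditionally on any value of `Φ`, `π_s` is injective on the essential range
      (∀ (φ₀ : F) (p p' : ℚ × ℚ),
        prb μ' {ω' | (X' ω', Y' ω') = p ∧ Φ ω' = φ₀} ≠ 0 →
        prb μ' {ω' | (X' ω', Y' ω') = p' ∧ Φ ω' = φ₀} ≠ 0 →
        pSlope s p = pSlope s p' → p = p') ∧
      -- (4) entropy inequalities
      (∀ r : Option ℚ,
        condEnt μ' (fun ω' => pSlope r (X' ω', Y' ω')) Φ ≤
          ent μ (fun ω => pSlope r (X ω, Y ω))) ∧
      condEnt μ' (fun ω' => pSlope s (X' ω', Y' ω')) Φ =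
        ent μ (fun ω => pSlope s (X ω, Y ω)) := by
  classical
  obtain ⟨e⟩ : Nonempty (Ω ≃ Fin (Fintype.card Ω)) := ⟨Fintype.equivFin Ω⟩
  set κ := Fin (Fintype.card Ω) with hκ
  set μ₀ : κ → ℝ := fun k => μ (e.symm k) with hμ₀
  set X₀ : κ → ℚ := fun k => X (e.symm k) with hX₀
  set Y₀ : κ → ℚ := fun k => Y (e.symm k) with hY₀
  have hequiv : ∀ P : Ω → Prop, prb μ₀ {k | P (e.symm k)} = prb μ {ω | P ω} := by
    intro P
    rw [prb_eq_sum_ite, prb_eq_sum_ite]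
    exact Equiv.sum_comp e.symm (fun ω => if P ω then μ ω else 0)
  have hμ₀prob : IsProb μ₀ :=
    ⟨fun k => hμ.1 _, (Equiv.sum_comp e.symm μ).trans hμ.2⟩
  obtain ⟨Ω', fin', μ', T₀, X', Y', F, Φ, hP, hpush, hdist, hae, hinj, hineq, heq⟩ :=
    aux_construction μ₀ hμ₀prob s X₀ Y₀
  refine ⟨Ω', fin', μ', fun w => e.symm (T₀ w), X', Y', F, Φ, hP, ?_, ?_, ?_, hinj, ?_, ?_⟩
  · intro ω
    show prb μ' {ω' | e.symm (T₀ ω') = ω} = μ ω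
    have h1 : {ω' : Ω' | e.symm (T₀ ω') = ω} = {w | T₀ w = e ω} := by
      ext w
      simp [Equiv.symm_apply_eq]
    rw [h1, hpush (e ω)]
    show μ (e.symm (e ω)) = μ ω
    rw [Equiv.symm_apply_apply]
  · intro q q'
    have h1 : {ω' : Ω' | X' ω' = q ∧ Y' ω' = q'} = {ω' | (X' ω', Y' ω') = (q, q')} := by
      ext w
      simp [Prod.ext_iff]
    rw [h1, hdist (q, q')]
    have h2 : prb μ₀ {k | (X (e.symm k), Y (e.symm k)) = (q, q')}
        = prb μ {ω | (X ω, Y ω) = (q, q')} := hequiv (fun ω => (X ω, Y ω) = (q, q'))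
    have h3 : prb μ {ω | (X ω, Y ω) = (q, q')} = prb μ {ω | X ω = q ∧ Y ω = q'} := by
      congr 1
      ext ω
      simp [Prod.ext_iff]
    exact h2.trans h3
  · exact hae
  · intro r
    refine le_trans (hineq r) (le_of_eq ?_)
    exact ent_congr_dist μ₀ μ _ _ (fun v => hequiv (fun ω => pSlope r (X ω, Y ω) = v))
  · refine heq.trans ?_
    exact ent_congr_dist μ₀ μ _ _ (fun v => hequiv (fun ω => pSlope s (X ω, Y ω) = v))
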